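/- Let p, δ, c, b be positive integers with (c−1)·δ < p and (b−1)·δ < p. Let α, u, v be integers with 1 ≤ |α| ≤ δ, |u| ≤ c−1 and |v| ≤ b−1. If p divides α·u and p divides α·(u+v), then u = 0 and v = 0. Consequently, for injective maps φ : {0,…,c−1} → {0,…,c−1} and ψ : {0,…,b−1} → {0,…,b−1} and block-column indices (i₀,j₀), (i₁,j₁), if p divides α·(φ(i₀) − φ(i₁)) and p divides α·((φ(i₀) − φ(i₁)) + (ψ(j₀) − ψ(j₁))), then i₀ = i₁ and j₀ = j₁. -/
import Mathlib

lemma key_aux (p δ n : ℕ) (hn : 0 < n) (h1 : (n - 1) * δ < p)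
    (α : ℤ) (hα1 : 1 ≤ |α|) (hαδ : |α| ≤ (δ : ℤ)) :
    ∀ u : ℤ, |u| ≤ (n : ℤ) - 1 → (p : ℤ) ∣ α * u → u = 0 := by
  intro u hu hdvd
  have hcast : ((n - 1 : ℕ) : ℤ) = (n : ℤ) - 1 := by
    omega
  have habs : |α * u| < (p : ℤ) := by
    rw [abs_mul]
    calc |α| * |u| ≤ (δ : ℤ) * ((n : ℤ) - 1) :=
          mul_le_mul hαδ hu (abs_nonneg u) (by positivity)
      _ < p := by
          have := h1
          push_cast [← hcast]
          rw [mul_comm]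
          exact_mod_cast by omega
  have h0 : α * u = 0 := Int.eq_zero_of_abs_lt_dvd hdvd habs
  have hα : α ≠ 0 := by
    intro h; rw [h, abs_zero] at hα1; omega
  exact (mul_eq_zero.mp h0).resolve_left hα

theorem stmt_11 (p δ c b : ℕ) (hp : 0 < p) (hδ : 0 < δ) (hc : 0 < c) (hb : 0 < b)
    (h1 : (c - 1) * δ < p) (h2 : (b - 1) * δ < p)
    (α : ℤ) (hα1 : 1 ≤ |α|) (hαδ : |α| ≤ (δ : ℤ)) :
    (∀ u v : ℤ, |u| ≤ (c : ℤ) - 1 → |v| ≤ (b : ℤ) - 1 →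
        (p : ℤ) ∣ α * u → (p : ℤ) ∣ α * (u + v) → u = 0 ∧ v = 0) ∧
    (∀ (φ : Fin c → Fin c) (ψ : Fin b → Fin b),
        Function.Injective φ → Function.Injective ψ →
        ∀ (i₀ i₁ : Fin c) (j₀ j₁ : Fin b),
          (p : ℤ) ∣ α * (((φ i₀ : ℕ) : ℤ) - ((φ i₁ : ℕ) : ℤ)) →
          (p : ℤ) ∣ α * ((((φ i₀ : ℕ) : ℤ) - ((φ i₁ : ℕ) : ℤ)) +
              (((ψ j₀ : ℕ) : ℤ) - ((ψ j₁ : ℕ) : ℤ))) →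
          i₀ = i₁ ∧ j₀ = j₁) := by
  have keyc := key_aux p δ c hc h1 α hα1 hαδ
  have keyb := key_aux p δ b hb h2 α hα1 hαδ
  have main : ∀ u v : ℤ, |u| ≤ (c : ℤ) - 1 → |v| ≤ (b : ℤ) - 1 →
      (p : ℤ) ∣ α * u → (p : ℤ) ∣ α * (u + v) → u = 0 ∧ v = 0 := by
    intro u v hu hv hd1 hd2
    have hu0 := keyc u hu hd1
    subst hu0
    simp only [zero_add] at hd2
    exact ⟨rfl, keyb v hv hd2⟩
  refine ⟨main, ?_⟩
  intro φ ψ hφ hψ i₀ i₁ j₀ j₁ hd1 hd2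
  have hub : |((φ i₀ : ℕ) : ℤ) - ((φ i₁ : ℕ) : ℤ)| ≤ (c : ℤ) - 1 := by
    have := (φ i₀).isLt; have := (φ i₁).isLt
    rw [abs_sub_le_iff]; omega
  have hvb : |((ψ j₀ : ℕ) : ℤ) - ((ψ j₁ : ℕ) : ℤ)| ≤ (b : ℤ) - 1 := by
    have := (ψ j₀).isLt; have := (ψ j₁).isLt
    rw [abs_sub_le_iff]; omega
  obtain ⟨hu0, hv0⟩ := main _ _ hub hvb hd1 hd2
  constructor
  · apply hφ; apply Fin.ext; omega
  · apply hψ; apply Fin.ext; omega
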